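/- Let X be uniform Bernoulli(1/2), Y the erasure of X with erasure probability p, W a random variable with W−X−Y a Markov chain, and X̂ = f(W) a Boolean-valued function of W with P(X ≠ X̂) ≤ D₁ for some D₁ ≤ 1/2. Then H(Y|W) ≤ h(p) + (1−p)·h(D₁). -/

import Mathlib

open Finset Real
open scoped Classical

noncomputable section

/-- Probability of an event under a finite probability mass function. -/
def pr {Ω : Type} [Fintype Ω] (P : Ω → ℝ) (A : Ω → Prop) : ℝ :=
  ∑ ω, if A ω then P ω else 0

/-- `P` is a probability mass function on the finite type `Ω`. -/
def IsPMF {Ω : Type} [Fintype Ω] (P : Ω → ℝ) : Prop :=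
  (∀ ω, 0 ≤ P ω) ∧ ∑ ω, P ω = 1

/-- `-t log₂ t` (with the convention `0 log 0 = 0`). -/
def nlog (t : ℝ) : ℝ := - (t * Real.logb 2 t)

/-- Shannon entropy (base 2) of a random variable `X` on `(Ω, P)`. -/
def ent {Ω α : Type} [Fintype Ω] [Fintype α] (P : Ω → ℝ) (X : Ω → α) : ℝ :=
  ∑ x, nlog (pr P (fun ω => X ω = x))

/-- Conditional Shannon entropy `H(X|Y) = H(X,Y) - H(Y)`. -/
def condEnt {Ω α β : Type} [Fintype Ω] [Fintype α] [Fintype β]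
    (P : Ω → ℝ) (X : Ω → α) (Y : Ω → β) : ℝ :=
  ent P (fun ω => (X ω, Y ω)) - ent P Y

/-- Mutual information `I(X;Y) = H(X) - H(X|Y)`. -/
def mi {Ω α β : Type} [Fintype Ω] [Fintype α] [Fintype β]
    (P : Ω → ℝ) (X : Ω → α) (Y : Ω → β) : ℝ :=
  ent P X - condEnt P X Y

/-- Conditional mutual information `I(X;Y|Z) = H(X|Z) - H(X|Y,Z)`. -/
def condMI {Ω α β γ : Type} [Fintype Ω] [Fintype α] [Fintype β] [Fintype γ]
    (P : Ω → ℝ) (X : Ω → α) (Y : Ω → β) (Z : Ω → γ) : ℝ :=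
  condEnt P X Z - condEnt P X (fun ω => (Y ω, Z ω))

/-- Binary entropy function. -/
def binEnt (a : ℝ) : ℝ := nlog a + nlog (1 - a)

section helpers
variable {Ω : Type} [Fintype Ω] {P : Ω → ℝ}

lemma pr_nonneg (hP : ∀ ω, 0 ≤ P ω) (A : Ω → Prop) : 0 ≤ pr P A :=
  Finset.sum_nonneg fun ω _ => by by_cases h : A ω <;> simp [pr, h, hP ω]

lemma pr_congr {A B : Ω → Prop} (h : ∀ ω, A ω ↔ B ω) : pr P A = pr P B := by
  unfold pr; exact Finset.sum_congr rfl fun ω _ => by rw [h ω]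

lemma pr_mono (hP : ∀ ω, 0 ≤ P ω) {A B : Ω → Prop} (h : ∀ ω, A ω → B ω) :
    pr P A ≤ pr P B := by
  refine Finset.sum_le_sum fun ω _ => ?_
  by_cases hA : A ω
  · simp [hA, h ω hA]
  · by_cases hB : B ω <;> simp [hA, hB, hP ω]

lemma pr_split (P : Ω → ℝ) (A C : Ω → Prop) :
    pr P A = pr P (fun ω => A ω ∧ C ω) + pr P (fun ω => A ω ∧ ¬ C ω) := by
  unfold pr
  rw [← Finset.sum_add_distrib]
  refine Finset.sum_congr rfl fun ω _ => ?_
  by_cases hA : A ω <;> by_cases hC : C ω <;> simp [hA, hC]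

lemma pr_partition {α : Type} [Fintype α] (A : Ω → Prop) (Z : Ω → α) :
    pr P A = ∑ x, pr P (fun ω => A ω ∧ Z ω = x) := by
  unfold pr
  rw [Finset.sum_comm]
  refine Finset.sum_congr rfl fun ω _ => ?_
  by_cases hA : A ω
  · simp [hA]
  · simp [hA]

lemma pr_fiber_sum {α : Type} [Fintype α] (hP : IsPMF P) (Z : Ω → α) :
    ∑ x, pr P (fun ω => Z ω = x) = 1 := by
  unfold pr
  rw [Finset.sum_comm]
  rw [← hP.2]
  refine Finset.sum_congr rfl fun ω _ => ?_
  simp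

lemma nlog_zero : nlog 0 = 0 := by simp [nlog]

lemma nlog_mul {x y : ℝ} (hx : 0 ≤ x) (hy : 0 ≤ y) :
    nlog (x * y) = x * nlog y + y * nlog x := by
  rcases eq_or_lt_of_le hx with h | hx'
  · simp [← h, nlog]
  rcases eq_or_lt_of_le hy with h | hy'
  · simp [← h, nlog]
  unfold nlog
  rw [Real.logb, Real.logb, Real.logb, Real.log_mul (ne_of_gt hx') (ne_of_gt hy')]
  ring

lemma nlog_eq (t : ℝ) : nlog t = Real.negMulLog t / Real.log 2 := by
  unfold nlog Real.negMulLog Real.logb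
  ring

lemma binEnt_eq (a : ℝ) : binEnt a = Real.binEntropy a / Real.log 2 := by
  rw [binEnt, nlog_eq, nlog_eq, Real.binEntropy_eq_negMulLog_add_negMulLog_one_sub]
  ring

lemma binEnt_concave : ConcaveOn ℝ (Set.Icc 0 1) binEnt := by
  have h := Real.strictConcave_binEntropy.concaveOn
  have := h.smul (c := (Real.log 2)⁻¹) (by positivity)
  have hfun : binEnt = fun x => (Real.log 2)⁻¹ • Real.binEntropy x := by
    ext a
    rw [binEnt_eq]
    simp [div_eq_inv_mul]
  rw [hfun]; exact this

lemma binEnt_mono {a b : ℝ} (ha : 0 ≤ a) (hab : a ≤ b) (hb : b ≤ 1/2) :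
    binEnt a ≤ binEnt b := by
  rw [binEnt_eq, binEnt_eq]
  have h2 : (0:ℝ) < Real.log 2 := Real.log_pos (by norm_num)
  gcongr
  exact Real.binEntropy_strictMonoOn.monotoneOn
    (Set.mem_Icc.2 ⟨ha, by linarith [hab, hb]⟩)
    (Set.mem_Icc.2 ⟨ha.trans hab, by linarith⟩) hab

end helpers

/-- For `X` uniform, `Y` its erasure with probability `p`, `W - X - Y` a Markov chain,
and `X̂₁ = f(W)` with `P(X ≠ X̂₁) ≤ D₁ ≤ 1/2`, we have `H(Y|W) ≤ h(p) + (1-p)h(D₁)`. -/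
theorem stmt3 {Ω γ : Type} [Fintype Ω] [Fintype γ] (P : Ω → ℝ) (hP : IsPMF P)
    (X : Ω → Bool) (Y : Ω → Option Bool) (W : Ω → γ) (f : γ → Bool)
    (p D₁ : ℝ) (hp0 : 0 ≤ p) (hp1 : p ≤ 1)
    (hX : ∀ b, pr P (fun ω => X ω = b) = 1/2)
    (hstruct : ∀ ω, Y ω = some (X ω) ∨ Y ω = none)
    (hind : ∀ b, pr P (fun ω => Y ω = none ∧ X ω = b) = p * pr P (fun ω => X ω = b))
    (hMarkov : ∀ (x : Bool) (y : Option Bool) (w : γ),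
      pr P (fun ω => X ω = x ∧ Y ω = y ∧ W ω = w) * pr P (fun ω => X ω = x)
        = pr P (fun ω => X ω = x ∧ Y ω = y) * pr P (fun ω => X ω = x ∧ W ω = w))
    (hD0 : 0 ≤ D₁) (hDhalf : D₁ ≤ 1/2)
    (hdist : pr P (fun ω => X ω ≠ f (W ω)) ≤ D₁) :
    condEnt P Y W ≤ binEnt p + (1 - p) * binEnt D₁ := by
  obtain ⟨hPn, hPs⟩ := hP
  set q : γ → ℝ := fun w => pr P (fun ω => W ω = w) with hq
  set a : Bool → γ → ℝ := fun b w => pr P (fun ω => X ω = b ∧ W ω = w) with ha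
  have hqn : ∀ w, 0 ≤ q w := fun w => pr_nonneg hPn _
  have han : ∀ b w, 0 ≤ a b w := fun b w => pr_nonneg hPn _
  have hq_sum : ∑ w, q w = 1 := pr_fiber_sum ⟨hPn, hPs⟩ W
  have haq : ∀ w, a true w + a false w = q w := by
    intro w
    show a true w + a false w = pr P (fun ω => W ω = w)
    rw [pr_split P (fun ω => W ω = w) (fun ω => X ω = true)]
    congr 1
    · exact pr_congr fun ω => by tauto
    · exact pr_congr fun ω => by simp [Bool.not_eq_true]; tauto
  -- (K1)
  have hK1 : ∀ b w, pr P (fun ω => X ω = b ∧ Y ω = none ∧ W ω = w) = p * a b w := by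
    intro b w
    have h := hMarkov b none w
    rw [hX b] at h
    have h2 : pr P (fun ω => X ω = b ∧ Y ω = none) = p * (1/2) := by
      rw [pr_congr (B := fun ω => Y ω = none ∧ X ω = b) (fun ω => by tauto), hind b, hX b]
    rw [h2] at h
    rw [ha]
    linarith
  -- (K2)
  have hK2 : ∀ w, pr P (fun ω => Y ω = none ∧ W ω = w) = p * q w := by
    intro w
    rw [pr_partition (fun ω => Y ω = none ∧ W ω = w) X, Fintype.sum_bool]
    have e1 : ∀ b : Bool, pr P (fun ω => (Y ω = none ∧ W ω = w) ∧ X ω = b)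
        = p * a b w := fun b => by
      rw [pr_congr (B := fun ω => X ω = b ∧ Y ω = none ∧ W ω = w) (fun ω => by tauto)]
      exact hK1 b w
    rw [e1 true, e1 false, ← haq w]
    ring
  -- (K3)
  have hK3 : ∀ b w, pr P (fun ω => Y ω = some b ∧ W ω = w) = (1 - p) * a b w := by
    intro b w
    have heq : pr P (fun ω => Y ω = some b ∧ W ω = w)
        = pr P (fun ω => (X ω = b ∧ W ω = w) ∧ ¬ (Y ω = none)) := by
      refine pr_congr fun ω => ?_
      constructor
      · rintro ⟨hy, hw⟩
        rcases hstruct ω with h | h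
        · rw [h] at hy
          exact ⟨⟨(Option.some_inj.1 hy), hw⟩, by simp [h]⟩
        · rw [h] at hy; exact absurd hy (by simp)
      · rintro ⟨⟨hx, hw⟩, hy⟩
        rcases hstruct ω with h | h
        · exact ⟨by rw [h, hx], hw⟩
        · exact absurd h hy
    rw [heq]
    have hsplit := pr_split P (fun ω => X ω = b ∧ W ω = w) (fun ω => Y ω = none)
    have h1 : pr P (fun ω => (X ω = b ∧ W ω = w) ∧ Y ω = none) = p * a b w := by
      rw [pr_congr (B := fun ω => X ω = b ∧ Y ω = none ∧ W ω = w) (fun ω => by tauto)]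
      exact hK1 b w
    have hab : a b w = pr P (fun ω => X ω = b ∧ W ω = w) := rfl
    linarith
  -- entropies as sums
  have hentW : ent P W = ∑ w, nlog (q w) := rfl
  have hentXW : ent P (fun ω => (X ω, W ω)) = ∑ b, ∑ w, nlog (a b w) := by
    rw [ent, Fintype.sum_prod_type]
    refine Finset.sum_congr rfl fun b _ => Finset.sum_congr rfl fun w _ => ?_
    congr 1
    exact pr_congr fun ω => by simp [Prod.ext_iff]
  have hentYW : ent P (fun ω => (Y ω, W ω))
      = ∑ w, nlog (p * q w) + ∑ b, ∑ w, nlog ((1 - p) * a b w) := by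
    rw [ent, Fintype.sum_prod_type, Fintype.sum_option]
    congr 1
    · refine Finset.sum_congr rfl fun w _ => ?_
      congr 1
      rw [pr_congr (B := fun ω => Y ω = none ∧ W ω = w) (fun ω => by simp [Prod.ext_iff])]
      exact hK2 w
    · refine Finset.sum_congr rfl fun b _ => Finset.sum_congr rfl fun w _ => ?_
      congr 1
      rw [pr_congr (B := fun ω => Y ω = some b ∧ W ω = w) (fun ω => by simp [Prod.ext_iff])]
      exact hK3 b w
  have ha_sum : ∑ b, ∑ w, a b w = 1 := by
    have hb : ∀ b, ∑ w, a b w = pr P (fun ω => X ω = b) :=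
      fun b => (pr_partition _ W).symm
    rw [Fintype.sum_bool, hb true, hb false, hX true, hX false]
    norm_num
  have e1 : ∑ w, nlog (p * q w) = p * (∑ w, nlog (q w)) + nlog p := by
    calc ∑ w, nlog (p * q w) = ∑ w, (p * nlog (q w) + q w * nlog p) :=
          Finset.sum_congr rfl fun w _ => nlog_mul hp0 (hqn w)
      _ = _ := by
          rw [Finset.sum_add_distrib, ← Finset.sum_mul, hq_sum, one_mul, ← Finset.mul_sum]
  have e2 : ∑ b, ∑ w, nlog ((1 - p) * a b w)
      = (1 - p) * (∑ b, ∑ w, nlog (a b w)) + nlog (1 - p) := by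
    have h1p : (0:ℝ) ≤ 1 - p := by linarith
    calc ∑ b, ∑ w, nlog ((1 - p) * a b w)
        = ∑ b, ∑ w, ((1 - p) * nlog (a b w) + a b w * nlog (1 - p)) :=
          Finset.sum_congr rfl fun b _ => Finset.sum_congr rfl fun w _ =>
            nlog_mul h1p (han b w)
      _ = _ := by
          simp only [Finset.sum_add_distrib, ← Finset.mul_sum, ← Finset.sum_mul]
          rw [ha_sum, one_mul]
  have key : condEnt P Y W = binEnt p + (1 - p) * condEnt P X W := by
    rw [condEnt, condEnt, hentYW, hentXW, hentW, e1, e2]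
    simp only [binEnt]
    ring
  -- Fano part
  set m : γ → ℝ := fun w => pr P (fun ω => X ω ≠ f (W ω) ∧ W ω = w) with hm
  have hm_eq : ∀ w, m w = a (!(f w)) w := by
    intro w
    refine pr_congr fun ω => ?_
    constructor
    · rintro ⟨h1, rfl⟩
      refine ⟨?_, rfl⟩
      revert h1; cases X ω <;> cases f (W ω) <;> simp
    · rintro ⟨h1, rfl⟩
      refine ⟨?_, rfl⟩
      rw [h1]; cases f (W ω) <;> simp
  have hm_nonneg : ∀ w, 0 ≤ m w := fun w => pr_nonneg hPn _
  have hm_le : ∀ w, m w ≤ q w := fun w => pr_mono hPn fun ω h => h.2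
  have hm_sum : ∑ w, m w = pr P (fun ω => X ω ≠ f (W ω)) := (pr_partition _ W).symm
  set e : γ → ℝ := fun w => if q w = 0 then 0 else m w / q w with he
  have he01 : ∀ w, e w ∈ Set.Icc (0:ℝ) 1 := by
    intro w
    by_cases h0 : q w = 0
    · simp [he, h0]
    · have hq' : 0 < q w := lt_of_le_of_ne (hqn w) (Ne.symm h0)
      simp only [he, h0, if_false]
      exact ⟨div_nonneg (hm_nonneg w) (hqn w), (div_le_one hq').2 (hm_le w)⟩
  have hqe : ∀ w, q w * e w = m w := by
    intro w
    by_cases h0 : q w = 0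
    · have hm0 : m w = 0 := le_antisymm (h0 ▸ hm_le w) (hm_nonneg w)
      simp [he, h0, hm0]
    · simp only [he, h0, if_false]
      field_simp
  have habq : ∀ (b : Bool) w, a b w + a (!b) w = q w := by
    intro b w; cases b
    · rw [← haq w]; simp; ring
    · rw [← haq w]; simp
  have hw_id : ∀ w, nlog (a true w) + nlog (a false w) - nlog (q w)
      = q w * binEnt (e w) := by
    intro w
    by_cases h0 : q w = 0
    · have h1 : a true w = 0 := by
        have := haq w; have := han false w; have := han true w; linarith [h0 ▸ this]
      have h2 : a false w = 0 := by
        have := haq w; have := han true w; linarith [h0 ▸ (le_refl (0:ℝ))]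
      simp [h0, h1, h2, nlog_zero]
    · have hq' : 0 < q w := lt_of_le_of_ne (hqn w) (Ne.symm h0)
      obtain ⟨he0, he1⟩ := he01 w
      have hmf : a (!(f w)) w = q w * e w := by rw [hqe w]; exact (hm_eq w).symm
      have hpf : a (f w) w = q w * (1 - e w) := by
        have h := habq (f w) w
        rw [mul_one_sub]
        rw [hmf] at h; linarith
      have hsplit : nlog (a true w) + nlog (a false w)
          = nlog (a (f w) w) + nlog (a (!(f w)) w) := by
        cases f w <;> simp <;> ring
      rw [hsplit, hpf, hmf, nlog_mul (hqn w) (by linarith), nlog_mul (hqn w) he0]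
      simp only [binEnt]
      ring
  have hCXW : condEnt P X W = ∑ w, q w * binEnt (e w) := by
    rw [condEnt, hentXW, hentW, Fintype.sum_bool, ← Finset.sum_add_distrib,
      ← Finset.sum_sub_distrib]
    exact Finset.sum_congr rfl fun w _ => hw_id w
  have hPe : ∑ w, q w * e w ≤ D₁ := by
    rw [Finset.sum_congr rfl fun w _ => hqe w, hm_sum]
    exact hdist
  have hPe0 : 0 ≤ ∑ w, q w * e w := by
    rw [Finset.sum_congr rfl fun w _ => hqe w]
    exact Finset.sum_nonneg fun w _ => hm_nonneg w
  have hjensen : ∑ w, q w * binEnt (e w) ≤ binEnt (∑ w, q w * e w) := by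
    have := binEnt_concave.le_map_sum (t := Finset.univ) (w := q) (p := e)
      (fun w _ => hqn w) hq_sum (fun w _ => he01 w)
    simpa using this
  have hfano : condEnt P X W ≤ binEnt D₁ := by
    rw [hCXW]
    exact hjensen.trans (binEnt_mono hPe0 hPe hDhalf)
  rw [key]
  have h1p : (0:ℝ) ≤ 1 - p := by linarith
  have := mul_le_mul_of_nonneg_left hfano h1p
  linarith
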